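/- arXiv:1410.8380 — 2 statements merged into one kernel-verified Lean document; each statement's English description precedes it below -/
import Mathlib

section
/- No proper subgroup of GL₂(F₅) with order divisible by 5 contains an element of order 24. -/
open Matrix
local notation "Mat" => Matrix (Fin 2) (Fin 2) (ZMod 5)
local notation "G2" => Matrix.GeneralLinearGroup (Fin 2) (ZMod 5)

instance fact5 : Fact (Nat.Prime 5) := ⟨by norm_num⟩

def X0 : G2 := ⟨!![1,1;0,1], !![1,4;0,1], by decide, by decide⟩
def Y0 : G2 := ⟨!![1,0;1,1], !![1,0;4,1], by decide, by decide⟩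

lemma ch2 (M : Mat) :
    M * M = (M 0 0 + M 1 1) • M - (M 0 0 * M 1 1 - M 0 1 * M 1 0) • (1 : Mat) := by
  ext i j
  fin_cases i <;> fin_cases j <;>
    simp [Matrix.mul_apply, Fin.sum_univ_two, Matrix.one_apply] <;> ring

lemma no12 (M : Mat) (hdet : M.det = 1) (h12 : M ^ 12 = 1) (h4 : M ^ 4 ≠ 1)
    (h6 : M ^ 6 ≠ 1) : False := by
  have hd : M 0 0 * M 1 1 - M 0 1 * M 1 0 = 1 := by rw [← Matrix.det_fin_two]; exact hdet
  have hCH := ch2 M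
  rw [hd, one_smul] at hCH
  have hsm : ∀ c : ZMod 5, c • M = (c • (1 : Mat)) * M := fun c => by
    rw [smul_mul_assoc, one_mul]
  have ht : ∀ z : ZMod 5, z = 0 ∨ z = 1 ∨ z = 2 ∨ z = 3 ∨ z = 4 := by decide
  have h2 : M ^ 2 = 1 → False := by
    intro h2'
    exact h4 (by rw [show (4:ℕ) = 2*2 from rfl, pow_mul, h2', one_pow])
  rcases ht (M 0 0 + M 1 1) with h | h | h | h | h <;> rw [h, hsm] at hCH
  · -- M*M = -1
    rw [show (0:ZMod 5) • (1:Mat) = 0 from by decide, zero_mul] at hCH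
    apply h4
    have : M ^ 4 = (M * M) * (M * M) := by noncomm_ring
    rw [this, hCH]; noncomm_ring
  · -- M*M = M - 1  => M^3 = -1
    rw [show (1:ZMod 5) • (1:Mat) = 1 from by decide, one_mul] at hCH
    apply h6
    have e3 : M ^ 3 = (M * M) * M := by noncomm_ring
    rw [hCH] at e3
    have e3' : (M - 1) * M = (M * M) - M := by noncomm_ring
    rw [e3', hCH] at e3
    have : M ^ 6 = (M ^ 3) ^ 2 := by noncomm_ring
    rw [this, e3]; noncomm_ring
  · -- trace 2 : (M-1)^2 = 0, M^5 = 1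
    rw [show (2:ZMod 5) • (1:Mat) = 2 from by decide] at hCH
    set m := M - 1 with hmdef
    have hm : m * m = 0 := by
      have : m * m = M * M - 2 * M + 1 := by rw [hmdef]; noncomm_ring
      rw [hCH] at this
      rw [this]; noncomm_ring
    have e5 : M ^ 5 = 1 + (5:Mat) * m + 10 * (m*m) + 10 * (m*m*m) + 5*(m*m*m*m) + m*m*m*m*m := by
      have : M = 1 + m := by rw [hmdef]; noncomm_ring
      rw [this]; noncomm_ring
    rw [hm] at e5
    simp only [mul_zero, zero_mul, mul_assoc] at e5
    rw [show ((5:Mat)) = 0 from by decide] at e5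
    simp at e5
    -- M^5 = 1, M^12 = 1 => M^2 = 1
    apply h2
    have : M ^ 12 = (M ^ 5) ^ 2 * M ^ 2 := by noncomm_ring
    rw [e5, one_pow, one_mul] at this
    rw [← this, h12]
  · -- trace 3 : (M+1)^2 = 0, M^5 = -1
    rw [show (3:ZMod 5) • (1:Mat) = 3 from by decide] at hCH
    set m := M + 1 with hmdef
    have hm : m * m = 0 := by
      have : m * m = M * M - 3 * M + (5:Mat) * M + 1 := by rw [hmdef]; noncomm_ring
      rw [hCH, show ((5:Mat)) = 0 from by decide] at this
      rw [this]; noncomm_ring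
    have e5 : M ^ 5 = -1 + (5:Mat) * m - 10 * (m*m) + 10 * (m*m*m) - 5*(m*m*m*m) + m*m*m*m*m := by
      have : M = -1 + m := by rw [hmdef]; abel
      rw [this]; noncomm_ring
    rw [hm] at e5
    simp only [mul_zero, zero_mul, mul_assoc] at e5
    rw [show ((5:Mat)) = 0 from by decide] at e5
    simp at e5
    -- M^5 = -1 => M^10 = 1, M^12 = 1 => M^2 = 1
    apply h2
    have : M ^ 12 = ((M ^ 5) * (M ^ 5)) * M ^ 2 := by noncomm_ring
    rw [e5] at this
    simp at this
    rw [← this, h12]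
  · -- trace 4 : M^3 = 1
    rw [show (4:ZMod 5) • (1:Mat) = 4 from by decide] at hCH
    apply h6
    have e3 : M ^ 3 = (M * M) * M := by noncomm_ring
    rw [hCH] at e3
    have e3' : ((4:Mat) * M - 1) * M = 4 * (M * M) - M := by noncomm_ring
    rw [e3', hCH] at e3
    have e3'' : M ^ 3 + 4 = (15:Mat) * M := by rw [e3, mul_sub, mul_one]; noncomm_ring
    rw [show ((15:Mat)) = 0 from by decide, zero_mul] at e3''
    have e3f : M ^ 3 = 1 := by
      have := eq_neg_of_add_eq_zero_left e3''
      rw [this, show (-(4:Mat)) = 1 from by decide]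
    have : M ^ 6 = (M ^ 3) ^ 2 := by noncomm_ring
    rw [this, e3f, one_pow]

/-- make a GL element from a matrix with nonzero det -/
noncomputable def mkU (m : Mat) (h : m.det ≠ 0) : G2 :=
  ⟨m, m⁻¹, Matrix.mul_nonsing_inv m (isUnit_iff_ne_zero.mpr h),
    Matrix.nonsing_inv_mul m (isUnit_iff_ne_zero.mpr h)⟩

@[simp] lemma mkU_val (m : Mat) (h : m.det ≠ 0) : (mkU m h : Mat) = m := rfl

lemma unip (u : G2) (hu5 : u ^ 5 = 1) (hune : u ≠ 1) :
    ∃ C D : G2, u * C = C * X0 ∧ u * D = D * Y0 := by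
  set U : Mat := (u : Mat) with hUdef
  have hU5 : U ^ 5 = 1 := by
    rw [hUdef, ← Units.val_pow_eq_pow_val, hu5, Units.val_one]
  have hUne : U ≠ 1 := fun h => hune (Units.ext h)
  set n : Mat := U - 1 with hndef
  have hn0 : n ≠ 0 := by
    rw [hndef]; exact sub_ne_zero.mpr hUne
  have hcomm : Commute U (-1 : Mat) := (Commute.one_right U).neg_right
  have hn5 : n ^ 5 = 0 := by
    have : n = U + (-1) := by rw [hndef]; abel
    rw [this, add_pow_char_of_commute 5 hcomm, hU5]
    norm_num
  have hdet : n.det = 0 := by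
    have : n.det ^ 5 = 0 := by rw [← Matrix.det_pow, hn5, Matrix.det_zero]
    exact pow_eq_zero_iff (by norm_num) |>.mp this
  have hd2 : n 0 0 * n 1 1 - n 0 1 * n 1 0 = 0 := by rw [← Matrix.det_fin_two]; exact hdet
  have hCH := ch2 n
  rw [hd2, zero_smul, sub_zero] at hCH
  set t : ZMod 5 := n 0 0 + n 1 1 with htdef
  have htz : t = 0 := by
    by_contra ht
    have e5 : n ^ 5 = (t*t*t*t) • n := by
      have e2 : n ^ 2 = t • n := by rw [pow_two, hCH]
      have e3 : n ^ 3 = (t*t) • n := by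
        rw [pow_succ, e2, smul_mul_assoc, hCH, smul_smul]
      have e4 : n ^ 4 = (t*t*t) • n := by
        rw [pow_succ, e3, smul_mul_assoc, hCH, smul_smul]
      rw [pow_succ, e4, smul_mul_assoc, hCH, smul_smul]
    rw [hn5] at e5
    rcases smul_eq_zero.mp e5.symm with h | h
    · exact ht (by
        have h4 : t ^ 4 = 0 := by rw [show t^4 = t*t*t*t from by ring]; exact h
        exact pow_eq_zero_iff (n := 4) (by norm_num) |>.mp h4)
    · exact hn0 h
  have hnn : n * n = 0 := by rw [hCH, htz, zero_smul]
  have E00 : n 0 0 * n 0 0 + n 0 1 * n 1 0 = 0 := by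
    have := congrFun (congrFun hnn 0) 0
    simpa [Matrix.mul_apply, Fin.sum_univ_two] using this
  have E10 : n 1 0 * n 0 0 + n 1 1 * n 1 0 = 0 := by
    have := congrFun (congrFun hnn 1) 0
    simpa [Matrix.mul_apply, Fin.sum_univ_two] using this
  have E11 : n 1 0 * n 0 1 + n 1 1 * n 1 1 = 0 := by
    have := congrFun (congrFun hnn 1) 1
    simpa [Matrix.mul_apply, Fin.sum_univ_two] using this
  have hU : U = 1 + n := by rw [hndef]; abel
  clear_value t
  clear htz hCH hnn hdet hd2 hn5 htdef
  clear_value n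
  obtain ⟨a, b, c, d, hn⟩ : ∃ a b c d, n = !![a, b; c, d] :=
    ⟨_, _, _, _, Matrix.eta_fin_two n⟩
  subst hn
  simp at E00 E10 E11
  by_cases hc : c = 0
  · -- n = !![0,b;0,0] with b ≠ 0
    have ha : a = 0 := by
      have : a * a = 0 := by rw [← E00, hc]; ring
      rcases mul_eq_zero.mp this with h | h <;> exact h
    have hd : d = 0 := by
      have : d * d = 0 := by rw [← E11, hc]; ring
      rcases mul_eq_zero.mp this with h | h <;> exact h
    subst ha; subst hc; subst hd
    have hb : b ≠ 0 := by
      intro hb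
      apply hn0
      rw [hb]
      decide
    refine ⟨mkU !![b, 0; 0, 1] (by rw [Matrix.det_fin_two_of]; simpa using hb),
           mkU !![0, b; 1, 0] (by rw [Matrix.det_fin_two_of]; simpa using hb), ?_, ?_⟩ <;>
      · apply Units.ext
        show U * _ = _ * _
        rw [mkU_val, hU]
        ext i j
        fin_cases i <;> fin_cases j <;>
          (simp [X0, Y0, Matrix.mul_apply, Fin.sum_univ_two, Matrix.one_apply]) <;> ring
  · -- main case: c ≠ 0
    refine ⟨mkU !![a, 1; c, 0] (by rw [Matrix.det_fin_two_of]; simpa using hc),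
           mkU !![1, a; 0, c] (by rw [Matrix.det_fin_two_of]; simpa using hc), ?_, ?_⟩ <;>
      · apply Units.ext
        show U * _ = _ * _
        rw [mkU_val, hU]
        ext i j
        fin_cases i <;> fin_cases j <;>
          (simp [X0, Y0, Matrix.mul_apply, Fin.sum_univ_two, Matrix.one_apply]) <;>
          (first
            | ring1
            | linear_combination E00
            | linear_combination E10
            | linear_combination -E00
            | linear_combination -E10
            | linear_combination E00 + E10
            | linear_combination E00 - E10
            | linear_combination -E00 + E10
            | linear_combination -E00 - E10)

def ev (l : List Bool) : G2 := l.foldr (fun b acc => (if b then Y0 else X0) * acc) 1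

def wl : List (List Bool) := [[], [false], [true], [false,false], [false,true], [true,false], [true,true], [false,false,false], [false,false,true], [false,true,false], [false,true,true], [true,false,false], [true,false,true], [true,true,false], [true,true,true], [false,false,false,false], [false,false,false,true], [false,false,true,false], [false,false,true,true], [false,true,false,false], [false,true,false,true], [false,true,true,false], [false,true,true,true], [true,false,false,false], [true,false,false,true], [true,false,true,false], [true,false,true,true], [true,true,false,false], [true,true,false,true], [true,true,true,false], [true,true,true,true], [false,false,false,false,true], [false,false,false,true,false], [false,false,false,true,true], [false,false,true,false,false], [false,false,true,false,true], [false,false,true,true,false], [false,false,true,true,true], [false,true,false,false,false], [false,true,false,false,true], [false,true,false,true,false], [false,true,false,true,true], [false,true,true,false,false], [false,true,true,false,true], [false,true,true,true,false], [false,true,true,true,true], [true,false,false,false,false], [true,false,false,false,true], [true,false,false,true,false], [true,false,true,false,false], [true,false,true,true,false], [true,false,true,true,true], [true,true,false,false,false], [true,true,false,true,false], [true,true,false,true,true], [true,true,true,false,false], [true,true,true,false,true], [true,true,true,true,false], [false,false,false,false,true,false], [false,false,false,false,true,true], [false,false,false,true,false,false]]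

instance G2deq : DecidableEq G2 := fun a b =>
  decidable_of_iff (a.val = b.val) (by rw [Units.ext_iff])

set_option maxRecDepth 10000 in
lemma wl_pairwise : ((wl.map ev).map Units.val).Pairwise (· ≠ ·) := by decide

lemma wl_nodup : (wl.map ev).Nodup := by
  have h := (List.pairwise_map).mp wl_pairwise
  exact h.imp (fun hne => fun he => hne (by rw [he]))

abbrev detG : G2 →* (ZMod 5)ˣ := Matrix.GeneralLinearGroup.det

lemma ev_mem (H : Subgroup G2) (hX : X0 ∈ H) (hY : Y0 ∈ H) :
    ∀ l : List Bool, ev l ∈ H := by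
  intro l
  induction l with
  | nil => exact one_mem H
  | cons b l ih =>
    show (if b then Y0 else X0) * ev l ∈ H
    cases b
    · exact mul_mem hX ih
    · exact mul_mem hY ih

lemma ev_det (l : List Bool) : detG (ev l) = 1 := by
  induction l with
  | nil => exact map_one detG
  | cons b l ih =>
    show detG ((if b then Y0 else X0) * ev l) = 1
    rw [_root_.map_mul, ih, mul_one]
    cases b
    · exact Units.ext (by simp [Matrix.GeneralLinearGroup.val_det_apply, X0])
    · exact Units.ext (by simp [Matrix.GeneralLinearGroup.val_det_apply, Y0])

attribute [-instance] fact5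

theorem stmt_4 (H : Subgroup (Matrix.GeneralLinearGroup (Fin 2) (ZMod 5)))
    (hH : H ≠ ⊤) (h5 : 5 ∣ Nat.card H) :
    ∀ g ∈ H, orderOf g ≠ 24 := by
  haveI := fact5
  intro g hg hord
  -- cardinality of GL₂(F₅)
  have hcard : Nat.card G2 = 480 := by
    rw [Matrix.card_GL_field]
    simp [Fin.prod_univ_two, ZMod.card]
  have hdvd : Nat.card H ∣ 480 := by
    rw [← hcard]; exact Subgroup.card_subgroup_dvd_card H
  have h24 : (24 : ℕ) ∣ Nat.card H := by
    have ho : orderOf (⟨g, hg⟩ : H) = 24 := by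
      rw [← hord]
      exact (orderOf_injective H.subtype Subtype.coe_injective ⟨g, hg⟩).symm
    rw [← ho]; exact orderOf_dvd_natCard _
  have h120 : (120 : ℕ) ∣ Nat.card H := by
    have := Nat.lcm_dvd h24 h5
    simpa [(by norm_num : Nat.lcm 24 5 = 120)] using this
  have hpos : 0 < Nat.card H := Nat.card_pos
  have hne480 : Nat.card H ≠ 480 := by
    intro h
    exact hH (Subgroup.eq_top_of_card_eq H (by rw [h, hcard]))
  have hcases : Nat.card H = 120 ∨ Nat.card H = 240 := by
    obtain ⟨k, hk⟩ := h120
    have hk4 : k ∣ 4 := by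
      have h1 : 120 * k ∣ 120 * 4 := by rw [← hk]; exact hdvd
      exact (mul_dvd_mul_iff_left (by norm_num : (120:ℕ) ≠ 0)).mp h1
    have hk4' : k ≤ 4 := Nat.le_of_dvd (by norm_num) hk4
    interval_cases k <;> omega
  -- the normal core has order divisible by 5
  have hNidx : H.normalCore.index ∣ 24 := by
    have hidx : H.index = 4 ∨ H.index = 2 := by
      have hmi := Subgroup.card_mul_index H
      rw [hcard] at hmi
      rcases hcases with h | h <;> rw [h] at hmi
      · left; omega
      · right; omega
    rw [Subgroup.normalCore_eq_ker]
    rw [Subgroup.index_ker]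
    haveI := Classical.decEq (G2 ⧸ H)
    haveI : Fintype (G2 ⧸ H) := Fintype.ofFinite _
    have hr : Nat.card (MulAction.toPermHom G2 (G2 ⧸ H)).range ∣
        Nat.card (Equiv.Perm (G2 ⧸ H)) := Subgroup.card_subgroup_dvd_card _
    have hq : Nat.card (Equiv.Perm (G2 ⧸ H)) = (H.index).factorial := by
      rw [Nat.card_eq_fintype_card, Fintype.card_perm, Subgroup.index_eq_card,
        Nat.card_eq_fintype_card]
    rw [hq] at hr
    refine hr.trans ?_
    rcases hidx with h | h <;> rw [h] <;> decide
  have hN5 : 5 ∣ Nat.card H.normalCore := by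
    obtain ⟨m, hm⟩ := hNidx
    have h2 : Nat.card H.normalCore * H.normalCore.index = 480 := by
      rw [← hcard]; exact Subgroup.card_mul_index _
    have hipos : H.normalCore.index ≠ 0 := by
      intro h; rw [h, mul_zero] at h2; omega
    have hcN : Nat.card H.normalCore = 20 * m := by
      have : Nat.card H.normalCore * H.normalCore.index = (20 * m) * H.normalCore.index := by
        rw [h2]
        have : (480 : ℕ) = 20 * 24 := by norm_num
        rw [this, hm]; ring
      exact Nat.eq_of_mul_eq_mul_right (Nat.pos_of_ne_zero hipos) this
    exact ⟨4 * m, by omega⟩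
  -- Cauchy: an element of order 5 in the normal core
  obtain ⟨v, hv⟩ := exists_prime_orderOf_dvd_card' (G := H.normalCore) 5 hN5
  obtain ⟨u, huN, hu5⟩ : ∃ u : G2, u ∈ H.normalCore ∧ orderOf u = 5 :=
    ⟨(v : G2), v.2, by
      exact (orderOf_injective H.normalCore.subtype Subtype.coe_injective v).trans hv⟩
  have huP : u ^ 5 = 1 := by
    have := pow_orderOf_eq_one u; rwa [hu5] at this
  have hune : u ≠ 1 := by
    intro h; rw [h, orderOf_one] at hu5; norm_num at hu5
  obtain ⟨C, D, hC, hD⟩ := unip u huP hune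
  have hconj : ∀ (c z : G2), u * c = c * z → z ∈ H.normalCore := by
    intro c z hcz
    have h1 : c⁻¹ * u * (c⁻¹)⁻¹ ∈ H.normalCore :=
      (Subgroup.normalCore_normal H).conj_mem u huN c⁻¹
    rw [inv_inv] at h1
    have : c⁻¹ * u * c = z := by
      rw [mul_assoc, hcz, ← mul_assoc, inv_mul_cancel, one_mul]
    rwa [this] at h1
  have hXH : X0 ∈ H := Subgroup.normalCore_le H (hconj C X0 hC)
  have hYH : Y0 ∈ H := Subgroup.normalCore_le H (hconj D Y0 hD)
  -- det g has order 4
  have hdg4 : orderOf (detG g) = 4 := by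
    have hd4 : orderOf (detG g) ∣ 4 := by
      have hc4 : Nat.card (ZMod 5)ˣ = 4 := by
        rw [Nat.card_eq_fintype_card, ZMod.card_units]
      rw [← hc4]; exact orderOf_dvd_natCard _
    have hsq : detG g ^ 2 ≠ 1 := by
      intro hsq
      have hg24 : g ^ 24 = 1 := by rw [← hord]; exact pow_orderOf_eq_one g
      apply no12 ((g : Mat) ^ 2)
      · have : ((g : Mat) ^ 2).det = ((detG g : ZMod 5)) ^ 2 := by
          rw [Matrix.det_pow, Matrix.GeneralLinearGroup.val_det_apply]
        rw [this, ← Units.val_pow_eq_pow_val, hsq, Units.val_one]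
      · have : ((g : Mat) ^ 2) ^ 12 = ((g ^ 24 : G2) : Mat) := by
          rw [← pow_mul, Units.val_pow_eq_pow_val]
        rw [this, hg24, Units.val_one]
      · intro h
        have : g ^ 8 = 1 := Units.ext (by
          rw [← Units.val_pow_eq_pow_val] at *
          calc ((g ^ 8 : G2) : Mat) = ((g : Mat) ^ 2) ^ 4 := by
                rw [Units.val_pow_eq_pow_val, ← pow_mul]
            _ = 1 := h)
        have := orderOf_dvd_of_pow_eq_one this
        rw [hord] at this
        exact absurd this (by norm_num)
      · intro h
        have : g ^ 12 = 1 := Units.ext (by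
          calc ((g ^ 12 : G2) : Mat) = ((g : Mat) ^ 2) ^ 6 := by
                rw [Units.val_pow_eq_pow_val, ← pow_mul]
            _ = 1 := h)
        have := orderOf_dvd_of_pow_eq_one this
        rw [hord] at this
        exact absurd this (by norm_num)
    have h24' : orderOf (detG g) ∣ 24 := by
      rw [← hord]; exact orderOf_map_dvd detG g
    obtain ⟨i, hi, hio⟩ := (Nat.dvd_prime_pow Nat.prime_two).mp
      (show orderOf (detG g) ∣ 2 ^ 2 from hd4)
    interval_cases i
    · exfalso; apply hsq
      have h1 : detG g = 1 := orderOf_eq_one_iff.mp (by rw [hio, pow_zero])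
      rw [h1, one_pow]
    · exfalso; apply hsq
      have : detG g ^ orderOf (detG g) = 1 := pow_orderOf_eq_one _
      rw [hio] at this; simpa using this
    · rw [hio]; rfl
  -- build 244 distinct elements of H
  have hmem : ∀ l ∈ wl.map ev, l ∈ H := by
    intro x hx
    obtain ⟨l, _, rfl⟩ := List.mem_map.mp hx
    exact ev_mem H hXH hYH l
  set T : Finset G2 := (wl.map ev).toFinset with hT
  have hTcard : T.card = 61 := by
    rw [hT, List.toFinset_card_of_nodup wl_nodup]
    decide
  have hdetT : ∀ x ∈ T, detG x = 1 := by
    intro x hx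
    rw [hT, List.mem_toFinset] at hx
    obtain ⟨l, _, rfl⟩ := List.mem_map.mp hx
    exact ev_det l
  have hTH : ∀ x ∈ T, x ∈ H := by
    intro x hx
    rw [hT, List.mem_toFinset] at hx
    exact hmem x hx
  classical
  let f : Fin 4 × {x // x ∈ T} → {x // x ∈ H} := fun p =>
    ⟨g ^ (p.1 : ℕ) * p.2.1, mul_mem (pow_mem hg _) (hTH p.2.1 p.2.2)⟩
  have hfinj : Function.Injective f := by
    rintro ⟨i, x, hx⟩ ⟨j, y, hy⟩ hxy
    have heq : g ^ (i : ℕ) * x = g ^ (j : ℕ) * y := congrArg Subtype.val hxy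
    have hdeq : detG g ^ (i : ℕ) = detG g ^ (j : ℕ) := by
      have := congrArg detG heq
      rwa [_root_.map_mul, _root_.map_mul, _root_.map_pow, _root_.map_pow,
        hdetT x hx, hdetT y hy, mul_one, mul_one] at this
    have hij : (i : ℕ) = (j : ℕ) :=
      pow_injOn_Iio_orderOf (x := detG g)
        (by rw [hdg4]; exact Set.mem_Iio.mpr i.isLt)
        (by rw [hdg4]; exact Set.mem_Iio.mpr j.isLt) hdeq
    have hxyeq : x = y := by
      have hgi : g ^ (i : ℕ) = g ^ (j : ℕ) := by rw [hij]
      rw [hgi] at heq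
      exact mul_left_cancel heq
    simp [Prod.ext_iff, Subtype.ext_iff, hij, hxyeq]
    exact Fin.ext hij
  have hle : Nat.card (Fin 4 × {x // x ∈ T}) ≤ Nat.card {x // x ∈ H} :=
    Nat.card_le_card_of_injective f hfinj
  have hcardP : Nat.card (Fin 4 × {x // x ∈ T}) = 244 := by
    rw [Nat.card_prod, Nat.card_eq_fintype_card, Nat.card_eq_fintype_card,
      Fintype.card_fin, Fintype.card_coe, hTcard]
  rw [hcardP] at hle
  rcases hcases with h | h <;> rw [h] at hle <;> omega
end

section
/- Let K be a number field with ring of integers O_K, u ∈ O_K, and L = K(√u). Let p be a prime ideal of O_K with 2 ∈ p and u ∉ p. If u = b² - 4c for some b, c ∈ O_K, then p is unramified in L/K. -/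
open NumberField Polynomial

/-- If `L = K(√u)` with `u ∈ 𝓞 K`, and `𝔭` is a prime of `𝓞 K` with `2 ∈ 𝔭`, `u ∉ 𝔭`,
and `u = b² - 4c` for some `b, c ∈ 𝓞 K`, then `𝔭` is unramified in `L/K`. -/
theorem stmt_12 (K L : Type*) [Field K] [NumberField K] [Field L] [NumberField L]
    [Algebra K L] (u : 𝓞 K) (s : L)
    (hs : s ^ 2 = algebraMap K L (algebraMap (𝓞 K) K u))
    (hgen : Algebra.adjoin K {s} = ⊤)
    (hnsq : ¬ ∃ t : K, t ^ 2 = algebraMap (𝓞 K) K u)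
    (p : Ideal (𝓞 K)) (hp : p.IsPrime) (hpbot : p ≠ ⊥)
    (h2 : (2 : 𝓞 K) ∈ p) (hu : u ∉ p)
    (b c : 𝓞 K) (hbc : u = b ^ 2 - 4 * c) :
    ∀ P : Ideal (𝓞 L), P.IsPrime → P.comap (algebraMap (𝓞 K) (𝓞 L)) = p →
      Ideal.ramificationIdx' p P = 1 := by
  intro P hP hPp
  have hinj : Function.Injective (algebraMap (𝓞 K) (𝓞 L)) :=
    NumberField.RingOfIntegers.algebraMap.injective K L
  have hinjL : Function.Injective (algebraMap (𝓞 L) L) :=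
    FaithfulSMul.algebraMap_injective (𝓞 L) L
  have hinjKL : Function.Injective (algebraMap K L) := (algebraMap K L).injective
  have h2L : (2 : L) ≠ 0 := two_ne_zero
  -- basic rewriting between the various algebra maps
  have key : ∀ x : 𝓞 K, algebraMap (𝓞 K) L x = algebraMap K L (algebraMap (𝓞 K) K x) :=
    fun x => IsScalarTower.algebraMap_apply (𝓞 K) K L x
  have key2 : ∀ x : 𝓞 K, algebraMap (𝓞 L) L (algebraMap (𝓞 K) (𝓞 L) x) = algebraMap (𝓞 K) L x :=
    fun x => (IsScalarTower.algebraMap_apply (𝓞 K) (𝓞 L) L x).symm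
  have hsU : s ^ 2 = algebraMap (𝓞 K) L u := by rw [key]; exact hs
  have hUeq : algebraMap (𝓞 K) L u
      = (algebraMap (𝓞 K) L b) ^ 2 - 4 * algebraMap (𝓞 K) L c := by
    rw [hbc]; push_cast [map_sub, map_mul, map_pow, map_ofNat]; ring
  -- s is an algebraic integer
  have hsint : IsIntegral ℤ s := by
    refine IsIntegral.of_pow (n := 2) two_pos ?_
    rw [hsU, ← key2]
    exact RingOfIntegers.isIntegral_coe _
  set sO : 𝓞 L := ⟨s, hsint⟩ with hsOdef
  have hsOL : algebraMap (𝓞 L) L sO = s := rfl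
  -- θ = (b + √u)/2 is an algebraic integer, root of X² - bX + c
  set θ : L := (algebraMap (𝓞 K) L b + s) / 2 with hθdef
  have hsθ : s = 2 * θ - algebraMap (𝓞 K) L b := by
    rw [hθdef]; field_simp; ring
  set g : (𝓞 K)[X] := X ^ 2 - C b * X + C c with hgdef
  have hgmonic : g.Monic := by
    unfold g; monicity!
  have hgdeg : g.natDegree = 2 := by
    unfold g; compute_degree!
  have hroot : (Polynomial.aeval θ) g = 0 := by
    unfold g
    simp only [map_add, map_sub, map_mul, aeval_X, aeval_C, map_pow]
    rw [hθdef]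
    field_simp
    linear_combination hsU + hUeq
  have hθint : IsIntegral (𝓞 K) θ := ⟨g, hgmonic, hroot⟩
  obtain ⟨θO, hθO⟩ := (IsIntegralClosure.isIntegral_iff (A := 𝓞 L)).mp hθint
  -- the relation 2θ - b = √u upstairs
  have hsO2 : sO = 2 * θO - algebraMap (𝓞 K) (𝓞 L) b := by
    apply hinjL
    rw [hsOL, map_sub, map_mul, hθO, key2, map_ofNat, hsθ]
  -- sO ∉ P
  have hsOsq : sO ^ 2 = algebraMap (𝓞 K) (𝓞 L) u := by
    apply hinjL
    rw [map_pow, hsOL, key2, hsU]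
  have hsOP : sO ∉ P := by
    intro hmem
    apply hu
    rw [← hPp]
    refine Ideal.mem_comap.mpr ?_
    rw [← hsOsq, pow_two]
    exact Ideal.mul_mem_left _ _ hmem
  -- θ generates L over K
  have hadj : Algebra.adjoin K {algebraMap (𝓞 L) L θO} = ⊤ := by
    rw [hθO, eq_top_iff, ← hgen, Algebra.adjoin_le_iff, Set.singleton_subset_iff]
    have : s = 2 * θ - algebraMap K L (algebraMap (𝓞 K) K b) := by rw [← key]; exact hsθ
    rw [SetLike.mem_coe, this]
    rw [two_mul]
    exact sub_mem (add_mem (Algebra.self_mem_adjoin_singleton K θ)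
      (Algebra.self_mem_adjoin_singleton K θ)) (Subalgebra.algebraMap_mem _ _)
  -- the minimal polynomial of θO is g
  have hθOint : IsIntegral (𝓞 K) θO := Algebra.IsIntegral.isIntegral θO
  have hrootO : (Polynomial.aeval θO) g = 0 := by
    apply hinjL
    rw [map_zero, ← Polynomial.aeval_algebraMap_apply, hθO, hroot]
  have hmin : minpoly (𝓞 K) θO = g := by
    obtain ⟨q, hq⟩ := minpoly.isIntegrallyClosed_dvd hθOint hrootO
    have hmmon : (minpoly (𝓞 K) θO).Monic := minpoly.monic hθOint
    have hqmon : q.Monic := hmmon.of_mul_monic_left (hq ▸ hgmonic)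
    have hdegs : (minpoly (𝓞 K) θO).natDegree + q.natDegree = 2 := by
      rw [← hgdeg, hq, Polynomial.natDegree_mul hmmon.ne_zero hqmon.ne_zero]
    have hd1 : (minpoly (𝓞 K) θO).natDegree ≠ 1 := by
      intro hd
      have hm := hmmon.eq_X_add_C hd
      have haev := minpoly.aeval (𝓞 K) θO
      rw [hm] at haev
      simp only [map_add, aeval_X, aeval_C] at haev
      -- θO is in the image of 𝓞 K, so s is a square root of u in K
      set a : 𝓞 K := (minpoly (𝓞 K) θO).coeff 0 with hadef
      apply hnsq
      refine ⟨algebraMap (𝓞 K) K (-(2 * a) - b), ?_⟩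
      apply hinjKL
      have hθval : θ = algebraMap (𝓞 K) L (-a) := by
        rw [← hθO, show θO = algebraMap (𝓞 K) (𝓞 L) (-a) by
          rw [map_neg]; linear_combination haev, key2]
      rw [map_pow, ← hs, hsθ, hθval]
      push_cast [map_sub, map_neg, map_mul, map_ofNat, ← key]
      ring
    have hd0 : 0 < (minpoly (𝓞 K) θO).natDegree := minpoly.natDegree_pos hθOint
    have hq0 : q.natDegree = 0 := by omega
    rw [hq, hqmon.natDegree_eq_zero.mp hq0, mul_one]
  -- f'(θO) = sO
  have hder : (Polynomial.aeval θO) (Polynomial.derivative (minpoly (𝓞 K) θO)) = sO := by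
    rw [hmin]
    unfold g
    simp only [Polynomial.derivative_add, Polynomial.derivative_sub, Polynomial.derivative_X_pow,
      Polynomial.derivative_mul, Polynomial.derivative_C, Polynomial.derivative_X, zero_mul,
      mul_one, zero_add, map_add, map_sub, map_mul, map_zero, map_one, aeval_X, aeval_C,
      map_pow, map_ofNat, map_natCast]
    rw [hsO2]
    push_cast
    ring
  -- main argument
  haveI hpmax : p.IsMaximal := Ideal.IsPrime.isMaximal hp hpbot
  have hPbot : P ≠ ⊥ := by
    rintro rfl
    rw [← Ideal.comap_bot_of_injective _ hinj] at hpbot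
    exact hpbot hPp.symm
  have hmaple : Ideal.map (algebraMap (𝓞 K) (𝓞 L)) p ≤ P :=
    Ideal.map_le_iff_le_comap.mpr (hPp ▸ le_rfl)
  have hmapbot : Ideal.map (algebraMap (𝓞 K) (𝓞 L)) p ≠ ⊥ := by
    intro h
    apply hpbot
    have hle := Ideal.le_comap_map (f := algebraMap (𝓞 K) (𝓞 L)) (I := p)
    rw [h, ← RingHom.ker_eq_comap_bot, RingOfIntegers.ker_algebraMap_eq_bot] at hle
    exact le_bot_iff.mp hle
  have hne : Ideal.ramificationIdx' p P ≠ 0 :=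
    Ideal.IsDedekindDomain.ramificationIdx'_ne_zero hmapbot hP hmaple
  by_contra hne1
  have h2le : 2 ≤ Ideal.ramificationIdx' p P := by omega
  have hPP : P ^ 2 ∣ Ideal.map (algebraMap (𝓞 K) (𝓞 L)) p :=
    Ideal.dvd_iff_le.mpr (Ideal.le_pow_of_le_ramificationIdx' h2le)
  haveI : Module.Finite (𝓞 K) (𝓞 L) := Module.Finite.of_restrictScalars_finite ℤ _ _
  have hdvdD : P ∣ differentIdeal (𝓞 K) (𝓞 L) := by
    have := pow_sub_one_dvd_differentIdeal_aux (𝓞 K) K (L := L) (B := 𝓞 L) P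
      (e := 2) two_ne_zero hpbot hPP
    simpa using this
  have hconf := conductor_mul_differentIdeal (𝓞 K) K L θO hadj
  rw [hder] at hconf
  have hdvdspan : P ∣ Ideal.span {sO} :=
    dvd_trans hdvdD ⟨conductor (𝓞 K) θO, by rw [← hconf]; ring⟩
  exact hsOP (Ideal.dvd_iff_le.mp hdvdspan (Ideal.mem_span_singleton_self sO))
end
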